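/- arXiv:2211.15567 — 2 statements merged into one kernel-verified Lean document; each statement's English description precedes it below -/
import Mathlib

section
/- Let n ≥ 1 and let a = (a_j)_{j∈ℤ} ⊂ ℝ and b = (b_j)_{j∈ℤ} ⊂ (0,∞) satisfy ∑_{j∈ℤ} |a_j| b_j^k < ∞ for every integer k ≥ 0 and ∑_{j∈ℤ} a_j (-b_j)^k = 1 for every integer k ≥ 0. Then for every f : ℝ^n → ℝ that is C^∞ with all partial derivatives of every order bounded on ℝ^n, the function E^{a,b}f is C^∞ on all of ℝ^n. -/
open Filter Asymptotics Topology
open scoped ContDiff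

lemma glue_contDiff {E : Type} [NormedAddCommGroup E] [NormedSpace ℝ E] :
    ∀ (n : ℕ) {F : Type} [NormedAddCommGroup F] [NormedSpace ℝ F]
    (f g : E × ℝ → F), ContDiff ℝ (⊤ : ℕ∞) f → ContDiff ℝ (⊤ : ℕ∞) g →
    (∀ (k : ℕ) (p : E × ℝ), p.2 = 0 → iteratedFDeriv ℝ k f p = iteratedFDeriv ℝ k g p) →
    ContDiff ℝ (n : ℕ∞) (fun x => if 0 ≤ x.2 then f x else g x) := by
  intro n
  induction n with
  | zero =>
    intro F _ _ f g hf hg h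
    have : (((0 : ℕ) : ℕ∞) : WithTop ℕ∞) = 0 := by norm_num
    rw [this, contDiff_zero]
    have : ∀ x : E × ℝ, (0 : ℝ) = x.2 → f x = g x := by
      intro x hx
      have h0 := h 0 x hx.symm
      have e1 : f x = iteratedFDeriv ℝ 0 f x (fun _ => 0) := (iteratedFDeriv_zero_apply _).symm
      rw [e1, h0, iteratedFDeriv_zero_apply]
    exact Continuous.if_le (hf.continuous) (hg.continuous) continuous_const continuous_snd this
  | succ n IH =>
    intro F _ _ f g hf hg h
    have hval : ∀ p : E × ℝ, p.2 = 0 → f p = g p := by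
      intro p hp
      have h0 := h 0 p hp
      have e1 : f p = iteratedFDeriv ℝ 0 f p (fun _ => 0) := (iteratedFDeriv_zero_apply _).symm
      rw [e1, h0, iteratedFDeriv_zero_apply]
    have hder : ∀ p : E × ℝ, p.2 = 0 → fderiv ℝ f p = fderiv ℝ g p := by
      intro p hp
      refine ContinuousLinearMap.ext fun v => ?_
      have h1 := h 1 p hp
      have e1 : fderiv ℝ f p v = iteratedFDeriv ℝ 1 f p (fun _ => v) := by
        rw [iteratedFDeriv_one_apply]
      rw [e1, h1, iteratedFDeriv_one_apply]
    set D : E × ℝ → (E × ℝ) →L[ℝ] F :=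
      fun x => if 0 ≤ x.2 then fderiv ℝ f x else fderiv ℝ g x with hDdef
    have key : ∀ x : E × ℝ, HasFDerivAt (fun x => if 0 ≤ x.2 then f x else g x) (D x) x := by
      intro x
      rcases lt_trichotomy x.2 0 with hx | hx | hx
      · have hev : (fun y : E × ℝ => if 0 ≤ y.2 then f y else g y) =ᶠ[𝓝 x] g := by
          filter_upwards [IsOpen.mem_nhds (isOpen_lt continuous_snd continuous_const) hx]
            with y hy
          simp [not_le.2 hy]
        have hD : D x = fderiv ℝ g x := if_neg (not_le.2 hx)
        rw [hD]
        exact ((hg.differentiable (by simp) x).hasFDerivAt).congr_of_eventuallyEq hev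
      · -- boundary
        have hD : D x = fderiv ℝ f x := if_pos hx.ge
        rw [hD]
        have hf' : HasFDerivAt f (fderiv ℝ f x) x := (hf.differentiable (by simp) x).hasFDerivAt
        have hg' : HasFDerivAt g (fderiv ℝ g x) x := (hg.differentiable (by simp) x).hasFDerivAt
        have A := (by rw [hasFDerivAt_iff_isLittleO] at hf'; exact hf')
        have B := (by rw [hasFDerivAt_iff_isLittleO] at hg'; exact hg')
        rw [hasFDerivAt_iff_isLittleO]
        have C : (fun y : E × ℝ => ‖f y - f x - fderiv ℝ f x (y - x)‖ +
            ‖g y - g x - fderiv ℝ g x (y - x)‖) =o[𝓝 x] (fun y => y - x) :=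
          A.norm_left.add B.norm_left
        refine IsBigO.trans_isLittleO (isBigO_of_le _ fun y => ?_) C
        have hxv : (if 0 ≤ x.2 then f x else g x) = f x := if_pos hx.ge
        by_cases hy : 0 ≤ y.2
        · simp only [if_pos hy, hxv]
          rw [Real.norm_eq_abs]
          refine le_trans ?_ (le_abs_self _)
          exact le_add_of_nonneg_right (norm_nonneg _)
        · simp only [if_neg hy, hxv]
          rw [hval x hx, hder x hx, Real.norm_eq_abs]
          refine le_trans ?_ (le_abs_self _)
          exact le_add_of_nonneg_left (norm_nonneg _)
      · have hev : (fun y : E × ℝ => if 0 ≤ y.2 then f y else g y) =ᶠ[𝓝 x] f := by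
          filter_upwards [IsOpen.mem_nhds (isOpen_lt continuous_const continuous_snd) hx]
            with y hy
          simp [le_of_lt hy]
        have hD : D x = fderiv ℝ f x := if_pos hx.le
        rw [hD]
        exact ((hf.differentiable (by simp) x).hasFDerivAt).congr_of_eventuallyEq hev
    have hdiff : Differentiable ℝ (fun x : E × ℝ => if 0 ≤ x.2 then f x else g x) :=
      fun x => (key x).differentiableAt
    have hfd : fderiv ℝ (fun x : E × ℝ => if 0 ≤ x.2 then f x else g x) = D :=
      funext fun x => (key x).fderiv
    have hcast : ((n + 1 : ℕ) : WithTop ℕ∞) = (n : WithTop ℕ∞) + 1 := by push_cast; ring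
    rw [show (((n + 1 : ℕ) : ℕ∞) : WithTop ℕ∞) = (n : WithTop ℕ∞) + 1 by exact_mod_cast hcast]
    rw [contDiff_succ_iff_fderiv]
    refine ⟨hdiff, ?_, ?_⟩
    · intro hω; exact absurd hω (by exact_mod_cast (by simp : (n : WithTop ℕ∞) ≠ ⊤))
    · rw [hfd]
      refine IH (fderiv ℝ f) (fderiv ℝ g) (hf.fderiv_right (by norm_num : ∞ + 1 ≤ ∞)) (hg.fderiv_right (by norm_num : ∞ + 1 ≤ ∞)) ?_
      intro k p hp
      have h1 := h (k + 1) p hp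
      rw [iteratedFDeriv_succ_eq_comp_right, iteratedFDeriv_succ_eq_comp_right] at h1
      exact (LinearIsometryEquiv.injective _) h1



/-- The half-space extension `E^{a,b}`: points of ℝ^n are written as pairs
`(x', xₙ) ∈ ℝ^{n-1} × ℝ`; `Eext a b f (x', xₙ) = f (x', xₙ)` for `xₙ ≥ 0` and
`= ∑_{j∈ℤ} a_j f(x', -b_j xₙ)` for `xₙ < 0`. -/
noncomputable def Eext {P : Type*} (a b : ℤ → ℝ) (f : P × ℝ → ℝ) : P × ℝ → ℝ :=
  fun x => if 0 ≤ x.2 then f x else ∑' j : ℤ, a j * f (x.1, -(b j) * x.2)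

/-- if ∑_j |a_j| b_j^k < ∞ and ∑_j a_j(-b_j)^k = 1 for every integer
k ≥ 0 (b_j > 0), then for every C^∞ function f all of whose derivatives of every
order are bounded on ℝ^n, the extension E^{a,b}f is C^∞ on all of ℝ^n. -/
theorem statement17 (m : ℕ) (a b : ℤ → ℝ) (hb : ∀ j, 0 < b j)
    (hsum : ∀ k : ℕ, Summable (fun j : ℤ => |a j| * b j ^ k))
    (hmom : ∀ k : ℕ, HasSum (fun j : ℤ => a j * (-(b j)) ^ k) 1)
    (f : (Fin m → ℝ) × ℝ → ℝ) (hf : ContDiff ℝ (⊤ : ℕ∞) f)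
    (hfb : ∀ i : ℕ, ∃ M : ℝ, ∀ x : (Fin m → ℝ) × ℝ, ‖iteratedFDeriv ℝ i f x‖ ≤ M) :
    ContDiff ℝ (⊤ : ℕ∞) (Eext a b f) := by
  classical
  choose M hM using hfb
  -- the linear equivalences x ↦ (x', -b_j x_n)
  have hbne : ∀ j, (-(b j)) ≠ 0 := fun j => neg_ne_zero.2 (hb j).ne'
  set e : ℤ → (((Fin m → ℝ) × ℝ) ≃L[ℝ] ((Fin m → ℝ) × ℝ)) := fun j =>
    (ContinuousLinearEquiv.refl ℝ (Fin m → ℝ)).prodCongr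
      (ContinuousLinearEquiv.unitsEquivAut ℝ (Units.mk0 (-(b j)) (hbne j))) with hedef
  set L : ℤ → (((Fin m → ℝ) × ℝ) →L[ℝ] ((Fin m → ℝ) × ℝ)) := fun j => (e j : ((Fin m → ℝ) × ℝ) →L[ℝ] ((Fin m → ℝ) × ℝ)) with hLdef
  have he : ∀ j (x : (Fin m → ℝ) × ℝ), e j x = (x.1, -(b j) * x.2) := by
    intro j x
    simp [hedef, ContinuousLinearEquiv.prodCongr_apply, ContinuousLinearEquiv.unitsEquivAut_apply,
      Units.val_mk0, mul_comm]
  have heL : ∀ j (x : (Fin m → ℝ) × ℝ), L j x = (x.1, -(b j) * x.2) := fun j x => he j x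
  -- norm bound on L j
  have hLnorm : ∀ j, ‖L j‖ ≤ 1 + b j := by
    intro j
    refine ContinuousLinearMap.opNorm_le_bound _ (by nlinarith [hb j]) fun v => ?_
    rw [heL]
    rw [Prod.norm_def]
    simp only [Prod.norm_def] at *
    apply max_le
    · calc ‖v.1‖ ≤ max ‖v.1‖ ‖v.2‖ := le_max_left _ _
        _ ≤ (1 + b j) * max ‖v.1‖ ‖v.2‖ := by nlinarith [le_max_left ‖v.1‖ ‖v.2‖, norm_nonneg v.1, norm_nonneg v.2, (hb j).le, le_max_right ‖v.1‖ ‖v.2‖]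
    · have : ‖-(b j) * v.2‖ = b j * ‖v.2‖ := by
        rw [norm_mul, norm_neg, Real.norm_eq_abs, abs_of_pos (hb j)]
      rw [this]
      calc b j * ‖v.2‖ ≤ b j * max ‖v.1‖ ‖v.2‖ :=
            mul_le_mul_of_nonneg_left (le_max_right _ _) (hb j).le
        _ ≤ (1 + b j) * max ‖v.1‖ ‖v.2‖ := by nlinarith [le_max_right ‖v.1‖ ‖v.2‖, norm_nonneg v.1, norm_nonneg v.2]
  -- the terms of the series
  set G : ℤ → (Fin m → ℝ) × ℝ → ℝ := fun j x => a j • f (L j x) with hGdef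
  have hGsm : ∀ j, ContDiff ℝ (⊤ : ℕ∞) (G j) := fun j =>
    ContDiff.const_smul (a j) (hf.comp (L j).contDiff)
  -- summable bounds
  have husum : ∀ (C : ℝ) (k : ℕ), Summable (fun j : ℤ => |a j| * (C * (1 + b j) ^ k)) := by
    intro C k
    have h1 : ∀ j : ℤ, |a j| * (C * (1 + b j) ^ k) =
        ∑ i ∈ Finset.range (k + 1), (C * (k.choose i : ℝ)) * (|a j| * b j ^ (k - i)) := by
      intro j
      rw [add_pow]
      rw [Finset.mul_sum, Finset.mul_sum]
      exact Finset.sum_congr rfl fun i _ => by ring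
    apply Summable.congr _ (fun j => (h1 j).symm)
    exact summable_sum (fun i _ => ((hsum (k - i)).mul_left _))
  -- iterated derivative of each term
  have hGder : ∀ (k : ℕ) (j : ℤ) (x : (Fin m → ℝ) × ℝ), iteratedFDeriv ℝ k (G j) x
      = a j • (iteratedFDeriv ℝ k f (L j x)).compContinuousLinearMap (fun _ => L j) := by
    intro k j x
    have e1 : iteratedFDeriv ℝ k (G j) x
        = a j • iteratedFDeriv ℝ k (fun x => f (L j x)) x :=
      iteratedFDeriv_const_smul_apply' ((hf.comp (L j).contDiff).contDiffAt.of_le (mod_cast le_top))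
    rw [e1]
    congr 1
    exact (L j).iteratedFDeriv_comp_right hf x (mod_cast le_top)
  have hns : ∀ (k : ℕ) (c : ℝ)
      (X : ContinuousMultilinearMap ℝ (fun _ : Fin k => (Fin m → ℝ) × ℝ) ℝ),
      ‖c • X‖ = |c| * ‖X‖ := fun k c X => by
    rw [show ‖c • X‖ = ‖c‖ * ‖X‖ from norm_smul c X, Real.norm_eq_abs]
  have hGbound : ∀ (k : ℕ) (j : ℤ) (x : (Fin m → ℝ) × ℝ),
      ‖iteratedFDeriv ℝ k (G j) x‖ ≤ |a j| * (M k * (1 + b j) ^ k) := by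
    intro k j x
    rw [hGder k j x, hns k]
    refine mul_le_mul_of_nonneg_left ?_ (abs_nonneg _)
    calc ‖(iteratedFDeriv ℝ k f (L j x)).compContinuousLinearMap (fun _ => L j)‖
        ≤ ‖iteratedFDeriv ℝ k f (L j x)‖ * ∏ _i : Fin k, ‖L j‖ :=
          ContinuousMultilinearMap.norm_compContinuousLinearMap_le _ _
      _ ≤ M k * (1 + b j) ^ k := by
          rw [Finset.prod_const, Finset.card_univ, Fintype.card_fin]
          have hMk : (0:ℝ) ≤ M k := (norm_nonneg _).trans (hM k x)
          have h2 : ‖L j‖ ≤ 1 + b j := hLnorm j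
          have h3 : (0:ℝ) ≤ ‖L j‖ := norm_nonneg _
          have h4 : ‖iteratedFDeriv ℝ k f (L j x)‖ ≤ M k := hM k _
          have h5 : ‖L j‖ ^ k ≤ (1 + b j) ^ k := pow_le_pow_left₀ h3 h2 k
          nlinarith [norm_nonneg (iteratedFDeriv ℝ k f (L j x)), pow_nonneg h3 k]
  -- the negative-side function
  set g : ((Fin m → ℝ) × ℝ) → ℝ := fun x => ∑' j : ℤ, G j x with hgdef
  have hgsm : ContDiff ℝ (⊤ : ℕ∞) g :=
    contDiff_tsum hGsm (fun k _ => husum (M k) k) (fun k j x _ => hGbound k j x)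
  -- rewrite Eext
  have hEeq : Eext a b f = fun x => if 0 ≤ x.2 then f x else g x := by
    funext x
    unfold Eext
    by_cases hx : 0 ≤ x.2
    · simp [hx]
    · simp only [if_neg hx]
      refine tsum_congr fun j => ?_
      rw [hGdef]
      simp only [heL j x, smul_eq_mul]
  rw [hEeq]
  -- matching of derivatives on the hyperplane
  have hmatch : ∀ (k : ℕ) (p : (Fin m → ℝ) × ℝ), p.2 = 0 →
      iteratedFDeriv ℝ k f p = iteratedFDeriv ℝ k g p := by
    intro k p hp
    have hLp : ∀ j, L j p = p := by
      intro j
      rw [heL]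
      rw [Prod.ext_iff]
      exact ⟨rfl, by simp [hp]⟩
    rw [hgdef]
    rw [iteratedFDeriv_tsum_apply hGsm (fun k _ => husum (M k) k)
      (fun k j x _ => hGbound k j x) le_top p]
    set T := iteratedFDeriv ℝ k f p with hT
    have hterm : ∀ j : ℤ, iteratedFDeriv ℝ k (G j) p
        = a j • T.compContinuousLinearMap (fun _ => L j) := by
      intro j
      rw [hGder k j p, hLp j]
    rw [tsum_congr hterm]
    set S : ℤ → ContinuousMultilinearMap ℝ (fun _ : Fin k => (Fin m → ℝ) × ℝ) ℝ :=
      fun j => a j • T.compContinuousLinearMap (fun _ => L j) with hSdef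
    -- summability of S
    have hSsum : Summable S := by
      apply Summable.of_norm_bounded (husum ‖T‖ k)
      intro j
      simp only [hSdef]
      rw [hns k]
      refine mul_le_mul_of_nonneg_left ?_ (abs_nonneg _)
      calc ‖T.compContinuousLinearMap (fun _ => L j)‖
          ≤ ‖T‖ * ∏ _i : Fin k, ‖L j‖ :=
            ContinuousMultilinearMap.norm_compContinuousLinearMap_le _ _
        _ ≤ ‖T‖ * (1 + b j) ^ k := by
            rw [Finset.prod_const, Finset.card_univ, Fintype.card_fin]
            exact mul_le_mul_of_nonneg_left
              (pow_le_pow_left₀ (norm_nonneg _) (hLnorm j) k) (norm_nonneg _)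
    -- evaluate: HasSum S T
    have h1 : HasSum S (∑' j, S j) := hSsum.hasSum
    have h2 : ∀ v : Fin k → (Fin m → ℝ) × ℝ, HasSum (fun j => S j v) (T v) := by
      intro v
      set w1 : Fin k → (Fin m → ℝ) × ℝ := fun i => ((v i).1, 0) with hw1
      set w2 : Fin k → (Fin m → ℝ) × ℝ := fun i => ((0 : Fin m → ℝ), (v i).2) with hw2
      have hexp : ∀ j : ℤ, S j v = ∑ s : Finset (Fin k),
          (a j * (-(b j)) ^ s.card) • T (s.piecewise w2 w1) := by
        intro j
        have hvi : ∀ i, L j (v i) = (-(b j)) • w2 i + w1 i := by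
          intro i
          rw [heL]
          rw [Prod.ext_iff]
          constructor
          · simp [hw1, hw2]
          · simp [hw1, hw2]
        have hTv : T (fun i => L j (v i)) = ∑ s : Finset (Fin k),
            (-(b j)) ^ s.card • T (s.piecewise w2 w1) := by
          calc T (fun i => L j (v i))
              = T ((fun i => (-(b j)) • w2 i) + w1) := by
                refine congrArg T (funext fun i => ?_)
                exact hvi i
            _ = ∑ s : Finset (Fin k), T (s.piecewise (fun i => (-(b j)) • w2 i) w1) :=
                T.toMultilinearMap.map_add_univ _ _
            _ = ∑ s : Finset (Fin k), (-(b j)) ^ s.card • T (s.piecewise w2 w1) := by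
                refine Finset.sum_congr rfl fun s _ => ?_
                have hpw : s.piecewise (fun i => (-(b j)) • w2 i) w1
                    = s.piecewise (fun i => (-(b j)) • (s.piecewise w2 w1) i)
                      (s.piecewise w2 w1) := by
                  funext i
                  by_cases hi : i ∈ s
                  · simp [Finset.piecewise_eq_of_mem _ _ _ hi]
                  · simp [Finset.piecewise_eq_of_notMem _ _ _ hi]
                rw [hpw]
                calc T (s.piecewise (fun i => (-(b j)) • (s.piecewise w2 w1) i)
                        (s.piecewise w2 w1))
                    = (∏ _i ∈ s, (-(b j))) • T (s.piecewise w2 w1) :=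
                      T.toMultilinearMap.map_piecewise_smul _ _ _
                  _ = (-(b j)) ^ s.card • T (s.piecewise w2 w1) := by
                      rw [Finset.prod_const]
        have hSv : S j v = a j • T (fun i => L j (v i)) := by
          simp only [hSdef, ContinuousMultilinearMap.smul_apply,
            ContinuousMultilinearMap.compContinuousLinearMap_apply]
        rw [hSv, hTv, Finset.smul_sum]
        refine Finset.sum_congr rfl fun s _ => ?_
        rw [smul_smul]
      have hfin : T v = ∑ s : Finset (Fin k), T (s.piecewise w2 w1) := by
        have hsum2 : w2 + w1 = v := by
          funext i
          rw [Prod.ext_iff]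
          constructor <;> simp [hw1, hw2]
        have := T.toMultilinearMap.map_add_univ w2 w1
        calc T v = T (w2 + w1) := by rw [hsum2]
          _ = ∑ s : Finset (Fin k), T (s.piecewise w2 w1) := this
      rw [hfin]
      have hfun : (fun j : ℤ => S j v) = fun j => ∑ s : Finset (Fin k),
          (a j * (-(b j)) ^ s.card) • T (s.piecewise w2 w1) := funext hexp
      rw [hfun]
      refine hasSum_sum fun s _ => ?_
      have := (hmom s.card).smul_const (T (s.piecewise w2 w1))
      simpa using this
    exact ContinuousMultilinearMap.ext fun v => (h2 v).unique
      (ContinuousMultilinearMap.hasSum_eval h1 v)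
  -- conclude via the gluing lemma
  have : ContDiff ℝ ∞ (fun x : (Fin m → ℝ) × ℝ => if 0 ≤ x.2 then f x else g x) := by
    rw [contDiff_infty]
    intro n
    exact glue_contDiff n f g hf hgsm hmatch
  exact this
end

section
/- Let n ≥ 1 and let a = (a_j)_{j∈ℤ} ⊂ ℝ and b = (b_j)_{j∈ℤ} ⊂ (0,∞) satisfy ∑_{j∈ℤ} |a_j| b_j^m < ∞ for every m ∈ ℤ and ∑_{j∈ℤ} a_j (-b_j)^{-k} = 1 for every integer k ≥ 1. For a Schwartz function g on ℝ^n, define E*g : ℝ^n → ℝ by E*g(x', x_n) := g(x', x_n) - ∑_{j∈ℤ} (a_j/(-b_j)) g(x', -x_n/b_j) for x_n > 0, and E*g(x', x_n) := 0 for x_n ≤ 0. Then E*g is a Schwartz function on ℝ^n with support contained in {x : x_n ≥ 0}, and for all multi-indices α, β ∈ ℕ^n there is a constant C = C(n, a, b, α, β), independent of g, such that sup_{x∈ℝ^n} |x^α ∂^β(E*g)(x)| ≤ C · sup_{y∈ℝ^n} |y^α ∂^β g(y)|. -/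
open scoped ContDiff


/-- Directional (partial) derivative in the direction `v`. -/
noncomputable def pd {E : Type*} [NormedAddCommGroup E] [NormedSpace ℝ E]
    (v : E) (f : E → ℝ) : E → ℝ :=
  fun x => fderiv ℝ f x v

/-- The `i`-th standard basis vector of ℝ^n = ℝ^{n-1} × ℝ (the last one being the
`xₙ` direction). -/
noncomputable def basisVec (m : ℕ) (i : Fin (m + 1)) : (Fin m → ℝ) × ℝ :=
  if h : (i : ℕ) < m then (Pi.single ⟨(i : ℕ), h⟩ 1, 0) else (0, 1)

/-- The iterated partial derivative `∂^β` associated with a multi-index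
`β : Fin (m+1) → ℕ` (the last component `β (Fin.last m)` is `βₙ`). -/
noncomputable def multiPD {m : ℕ} (γ : Fin (m + 1) → ℕ)
    (f : (Fin m → ℝ) × ℝ → ℝ) : (Fin m → ℝ) × ℝ → ℝ :=
  ((List.ofFn (fun i : Fin (m + 1) => (pd (basisVec m i))^[γ i])).foldr (· ∘ ·) id) f

/-- The monomial `x^α = x₁^{α₁} ⋯ xₙ^{αₙ}` on ℝ^n = ℝ^{n-1} × ℝ. -/
def mono {m : ℕ} (α : Fin (m + 1) → ℕ) (x : (Fin m → ℝ) × ℝ) : ℝ :=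
  (∏ i : Fin m, x.1 i ^ α i.castSucc) * x.2 ^ α (Fin.last m)

/-- A Schwartz function on ℝ^n = ℝ^{n-1} × ℝ: C^∞ with all seminorms
`sup_x |x^α ∂^β g(x)|` finite. -/
def IsSchwartzFn {m : ℕ} (g : (Fin m → ℝ) × ℝ → ℝ) : Prop :=
  ContDiff ℝ (⊤ : ℕ∞) g ∧
  ∀ α β : Fin (m + 1) → ℕ, ∃ M : ℝ, ∀ x : (Fin m → ℝ) × ℝ, |mono α x * multiPD β g x| ≤ M

/-- The adjoint extension operator `E*`:
`E*g(x', xₙ) = g(x', xₙ) - ∑_j (a_j/(-b_j)) g(x', -xₙ/b_j)` for `xₙ > 0`, and `0`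
for `xₙ ≤ 0`. -/
noncomputable def Eadj {m : ℕ} (a b : ℤ → ℝ) (g : (Fin m → ℝ) × ℝ → ℝ) :
    (Fin m → ℝ) × ℝ → ℝ :=
  fun x => if 0 < x.2 then g x - ∑' j : ℤ, a j / (-(b j)) * g (x.1, -x.2 / b j) else 0

namespace S18

variable {m : ℕ}

noncomputable def pdList (l : List ((Fin m → ℝ) × ℝ)) (f : (Fin m → ℝ) × ℝ → ℝ) :
    (Fin m → ℝ) × ℝ → ℝ :=
  l.foldr pd f

@[simp] lemma pdList_nil (f : (Fin m → ℝ) × ℝ → ℝ) : pdList [] f = f := rfl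

@[simp] lemma pdList_cons (v : (Fin m → ℝ) × ℝ) (l : List ((Fin m → ℝ) × ℝ))
    (f : (Fin m → ℝ) × ℝ → ℝ) : pdList (v :: l) f = pd v (pdList l f) := rfl

lemma pdList_append (l₁ l₂ : List ((Fin m → ℝ) × ℝ)) (f : (Fin m → ℝ) × ℝ → ℝ) :
    pdList (l₁ ++ l₂) f = pdList l₁ (pdList l₂ f) := by
  simp [pdList, List.foldr_append]

/-- `(pd v)^[n] = pdList (replicate n v)`. -/
lemma pd_iterate (v : (Fin m → ℝ) × ℝ) (n : ℕ) (f : (Fin m → ℝ) × ℝ → ℝ) :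
    (pd v)^[n] f = pdList (List.replicate n v) f := by
  induction n with
  | zero => rfl
  | succ n ih =>
    rw [Function.iterate_succ_apply', ih, List.replicate_succ, pdList_cons]

lemma foldr_pdList (ll : List (List ((Fin m → ℝ) × ℝ))) (f : (Fin m → ℝ) × ℝ → ℝ) :
    ((ll.map pdList).foldr (· ∘ ·) id) f = pdList ll.flatten f := by
  induction ll with
  | nil => rfl
  | cons l ll ih =>
    simp only [List.map_cons, List.foldr_cons, Function.comp_apply, ih,
      List.flatten_cons, pdList_append]

/-- index list `[0,…,0,1,…,1,…]` with `γ i` copies of `i`. -/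
def idxList (γ : Fin (m + 1) → ℕ) : List (Fin (m + 1)) :=
  (List.ofFn fun i => List.replicate (γ i) i).flatten

lemma multiPD_eq_pdList (γ : Fin (m + 1) → ℕ) (f : (Fin m → ℝ) × ℝ → ℝ) :
    multiPD γ f = pdList ((idxList γ).map (basisVec m)) f := by
  have h1 : (fun i : Fin (m+1) => (pd (basisVec m i))^[γ i])
      = fun i => pdList (List.replicate (γ i) (basisVec m i)) := by
    funext i g
    exact pd_iterate _ _ _
  have h2 : ((idxList γ).map (basisVec m))
      = (List.ofFn fun i => List.replicate (γ i) (basisVec m i)).flatten := by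
    simp [idxList, List.map_flatten, List.map_ofFn, Function.comp_def, List.map_replicate]
  rw [multiPD, h1, h2]
  have h3 : (List.ofFn fun i => pdList (List.replicate (γ i) (basisVec m i)))
      = (List.ofFn fun i => List.replicate (γ i) (basisVec m i)).map pdList := by
    rw [List.map_ofFn]; rfl
  rw [h3, foldr_pdList]

lemma pd_comm {f : (Fin m → ℝ) × ℝ → ℝ} (hf : ContDiff ℝ (⊤:ℕ∞) f)
    (v w x : (Fin m → ℝ) × ℝ) : pd v (pd w f) x = pd w (pd v f) x := by
  have hdiff : Differentiable ℝ f := hf.differentiable (by simp)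
  have hf' : ContDiff ℝ (⊤:ℕ∞) (fderiv ℝ f) := hf.fderiv_right (by simp)
  have hd : ∀ y, HasFDerivAt f (fderiv ℝ f y) y := fun y => (hdiff y).hasFDerivAt
  have hd2 : HasFDerivAt (fderiv ℝ f) (fderiv ℝ (fderiv ℝ f) x) x :=
    ((hf'.differentiable (by simp)) x).hasFDerivAt
  have key : ∀ u z : (Fin m → ℝ) × ℝ, pd z (pd u f) x = fderiv ℝ (fderiv ℝ f) x z u := by
    intro u z
    have hcomp : HasFDerivAt (fun y => fderiv ℝ f y u)
        ((ContinuousLinearMap.apply ℝ ℝ u).comp (fderiv ℝ (fderiv ℝ f) x)) x :=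
      ((ContinuousLinearMap.apply ℝ ℝ u).hasFDerivAt).comp x hd2
    show fderiv ℝ (fun y => fderiv ℝ f y u) x z = _
    rw [hcomp.fderiv]
    rfl
  rw [key w v, key v w]
  exact second_derivative_symmetric hd hd2 v w

lemma pd_smooth {v : (Fin m → ℝ) × ℝ} {f : (Fin m → ℝ) × ℝ → ℝ}
    (hf : ContDiff ℝ (⊤:ℕ∞) f) : ContDiff ℝ (⊤:ℕ∞) (pd v f) := by
  have h1 : ContDiff ℝ (⊤:ℕ∞) (fderiv ℝ f) := hf.fderiv_right (by simp)
  exact ((ContinuousLinearMap.apply ℝ ℝ v).contDiff).comp h1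

/-- peeling the last vector of an iterated derivative. -/
lemma pdList_smooth {l : List ((Fin m → ℝ) × ℝ)} {f : (Fin m → ℝ) × ℝ → ℝ}
    (hf : ContDiff ℝ (⊤:ℕ∞) f) : ContDiff ℝ (⊤:ℕ∞) (pdList l f) := by
  induction l with
  | nil => exact hf
  | cons v l ih => exact pd_smooth ih

lemma itd_snoc {f : (Fin m → ℝ) × ℝ → ℝ} (hf : ContDiff ℝ (⊤:ℕ∞) f) {n : ℕ}
    (x : (Fin m → ℝ) × ℝ) (v : Fin (n + 1) → (Fin m → ℝ) × ℝ) :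
    iteratedFDeriv ℝ (n + 1) f x v
      = iteratedFDeriv ℝ n (pd (v (Fin.last n)) f) x (Fin.init v) := by
  have hf' : ContDiff ℝ (⊤:ℕ∞) (fderiv ℝ f) := hf.fderiv_right (by simp)
  rw [iteratedFDeriv_succ_apply_right]
  have hcl := (ContinuousLinearMap.apply ℝ ℝ (v (Fin.last n))).iteratedFDeriv_comp_left
    (f := fderiv ℝ f) (hf'.contDiffAt (x := x)) (i := n) (by exact_mod_cast le_top)
  have : pd (v (Fin.last n)) f
      = (ContinuousLinearMap.apply ℝ ℝ (v (Fin.last n))) ∘ (fderiv ℝ f) := rfl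
  rw [this, hcl]
  rfl

lemma itd_eq_pdList {f : (Fin m → ℝ) × ℝ → ℝ} (hf : ContDiff ℝ (⊤:ℕ∞) f) :
    ∀ (n : ℕ) (v : Fin n → (Fin m → ℝ) × ℝ) (x : (Fin m → ℝ) × ℝ),
      iteratedFDeriv ℝ n f x v = pdList (List.ofFn v) f x := by
  intro n
  induction n generalizing f with
  | zero =>
    intro v x
    simp [iteratedFDeriv_zero_apply]
  | succ n ih =>
    intro v x
    rw [itd_snoc hf x v, ih (pd_smooth hf) (Fin.init v) x]
    have : List.ofFn v = List.ofFn (Fin.init v) ++ [v (Fin.last n)] := by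
      rw [List.ofFn_succ', List.concat_eq_append]
      rfl
    rw [this, pdList_append]
    rfl


lemma pdList_perm {l₁ l₂ : List ((Fin m → ℝ) × ℝ)} (h : l₁.Perm l₂)
    {f : (Fin m → ℝ) × ℝ → ℝ} (hf : ContDiff ℝ (⊤:ℕ∞) f) : pdList l₁ f = pdList l₂ f := by
  induction h generalizing f with
  | nil => rfl
  | cons v _ ih => simp [ih hf]
  | swap v w l => exact funext fun x => pd_comm (pdList_smooth hf) _ _ x
  | trans _ _ ih₁ ih₂ => rw [ih₁ hf, ih₂ hf]

/-- coordinates w.r.t. the standard basis. -/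
noncomputable def coord (i : Fin (m + 1)) (w : (Fin m → ℝ) × ℝ) : ℝ :=
  if h : (i : ℕ) < m then w.1 ⟨(i : ℕ), h⟩ else w.2

lemma basis_decomp (w : (Fin m → ℝ) × ℝ) :
    (∑ i : Fin (m + 1), coord i w • basisVec m i) = w := by
  rw [Fin.sum_univ_castSucc]
  have h1 : ∀ j : Fin m, coord (Fin.castSucc j) w • basisVec m (Fin.castSucc j)
      = (Pi.single j (w.1 j), (0:ℝ)) := by
    intro j
    have hj : ((Fin.castSucc j : Fin (m+1)) : ℕ) < m := j.isLt
    simp only [coord, basisVec, dif_pos hj]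
    have : (⟨((Fin.castSucc j : Fin (m+1)) : ℕ), hj⟩ : Fin m) = j := by
      ext; simp
    rw [this]
    ext k
    · simp [Pi.single_apply, smul_eq_mul, mul_comm]
    · simp
  have h2 : coord (Fin.last m) w • basisVec m (Fin.last m) = ((0 : Fin m → ℝ), w.2) := by
    simp [coord, basisVec]
  rw [h2]
  have h3 : (∑ j : Fin m, coord (Fin.castSucc j) w • basisVec m (Fin.castSucc j))
      = ((w.1 : Fin m → ℝ), (0:ℝ)) := by
    rw [Finset.sum_congr rfl fun j _ => h1 j]
    ext
    · rw [Prod.fst_sum]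
      simp [Finset.univ_sum_single]
    · simp [Prod.snd_sum]
  rw [h3]
  ext <;> simp

lemma abs_coord_le (i : Fin (m + 1)) (w : (Fin m → ℝ) × ℝ) : |coord i w| ≤ ‖w‖ := by
  unfold coord
  split_ifs with h
  · calc |w.1 ⟨(i:ℕ), h⟩| = ‖w.1 ⟨(i:ℕ), h⟩‖ := rfl
      _ ≤ ‖w.1‖ := norm_le_pi_norm w.1 _
      _ ≤ ‖w‖ := norm_fst_le w
  · calc |w.2| = ‖w.2‖ := rfl
      _ ≤ ‖w‖ := norm_snd_le w

lemma count_idxList (γ : Fin (m + 1) → ℕ) (i : Fin (m + 1)) :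
    (idxList γ).count i = γ i := by
  unfold idxList
  rw [List.count_flatten, List.map_ofFn, List.sum_ofFn]
  simp only [Function.comp_apply, List.count_replicate]
  simp [Finset.sum_ite_eq]

lemma pdList_map_basis (l : List (Fin (m + 1))) {g : (Fin m → ℝ) × ℝ → ℝ}
    (hg : ContDiff ℝ (⊤:ℕ∞) g) :
    pdList (l.map (basisVec m)) g = multiPD (fun i => l.count i) g := by
  rw [multiPD_eq_pdList]
  refine pdList_perm (List.Perm.map _ ?_) hg
  exact List.perm_iff_count.mpr fun i => (count_idxList (fun j => l.count j) i).symm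

lemma mono_zero (x : (Fin m → ℝ) × ℝ) : mono (fun _ => 0) x = 1 := by
  simp [mono]

/-- uniform bounds on all pure multiPD derivatives. -/
lemma schwartz_multiPD_bound {g : (Fin m → ℝ) × ℝ → ℝ} (hg : IsSchwartzFn g)
    (γ : Fin (m + 1) → ℕ) : ∃ M : ℝ, ∀ x, |multiPD γ g x| ≤ M := by
  obtain ⟨M, hM⟩ := hg.2 (fun _ => 0) γ
  exact ⟨M, fun x => by simpa [mono_zero] using hM x⟩

/-- bounds on the full iterated derivatives from the Schwartz seminorms. -/
lemma schwartz_itd_bound {g : (Fin m → ℝ) × ℝ → ℝ} (hg : IsSchwartzFn g) (k : ℕ) :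
    ∃ M : ℝ, 0 ≤ M ∧ ∀ x, ‖iteratedFDeriv ℝ k g x‖ ≤ M := by
  classical
  have hMf : ∀ γ : Fin (m + 1) → ℕ, ∃ M : ℝ, ∀ x, |multiPD γ g x| ≤ M :=
    schwartz_multiPD_bound hg
  choose Mf hMfs using hMf
  have hMf0 : ∀ γ, 0 ≤ Mf γ := fun γ => le_trans (abs_nonneg _) (hMfs γ (0, 0))
  refine ⟨∑ r : Fin k → Fin (m + 1), Mf (fun i => (List.ofFn r).count i),
    Finset.sum_nonneg fun r _ => hMf0 _, fun x => ?_⟩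
  apply ContinuousMultilinearMap.opNorm_le_bound (Finset.sum_nonneg fun r _ => hMf0 _)
  intro v
  have expand : iteratedFDeriv ℝ k g x v
      = ∑ r : Fin k → Fin (m + 1),
          (∏ i, coord (r i) (v i)) • iteratedFDeriv ℝ k g x (fun i => basisVec m (r i)) := by
    conv_lhs => rw [show v = fun i => ∑ j : Fin (m+1), coord j (v i) • basisVec m j from
      funext fun i => (basis_decomp (v i)).symm]
    exact ((iteratedFDeriv ℝ k g x).toMultilinearMap.map_sum
      (g := fun i j => coord j (v i) • basisVec m j)).trans
      (Finset.sum_congr rfl fun r _ =>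
        (iteratedFDeriv ℝ k g x).toMultilinearMap.map_smul_univ _ _)
  rw [expand]
  calc ‖∑ r : Fin k → Fin (m + 1),
      (∏ i, coord (r i) (v i)) • iteratedFDeriv ℝ k g x (fun i => basisVec m (r i))‖
      ≤ ∑ r : Fin k → Fin (m + 1),
        ‖(∏ i, coord (r i) (v i)) • iteratedFDeriv ℝ k g x (fun i => basisVec m (r i))‖ :=
        norm_sum_le _ _
    _ ≤ ∑ r : Fin k → Fin (m + 1), Mf (fun i => (List.ofFn r).count i) * ∏ i, ‖v i‖ := by
        refine Finset.sum_le_sum fun r _ => ?_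
        rw [norm_smul]
        have hval : iteratedFDeriv ℝ k g x (fun i => basisVec m (r i))
            = multiPD (fun i => (List.ofFn r).count i) g x := by
          rw [itd_eq_pdList hg.1 k (fun i => basisVec m (r i)) x,
            show List.ofFn (fun i => basisVec m (r i)) = (List.ofFn r).map (basisVec m) from
              (List.map_ofFn (f := r) (g := basisVec m)).symm,
            pdList_map_basis _ hg.1]
        have h1 : ‖(∏ i, coord (r i) (v i))‖ ≤ ∏ i, ‖v i‖ := by
          rw [Real.norm_eq_abs, Finset.abs_prod]
          exact Finset.prod_le_prod (fun i _ => abs_nonneg _)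
            (fun i _ => abs_coord_le _ _)
        have h2 : ‖iteratedFDeriv ℝ k g x (fun i => basisVec m (r i))‖
            ≤ Mf (fun i => (List.ofFn r).count i) := by
          rw [hval]; exact hMfs _ x
        calc ‖(∏ i, coord (r i) (v i))‖ * ‖iteratedFDeriv ℝ k g x (fun i => basisVec m (r i))‖
            ≤ (∏ i, ‖v i‖) * Mf (fun i => (List.ofFn r).count i) :=
              mul_le_mul h1 h2 (norm_nonneg _) (Finset.prod_nonneg fun _ _ => norm_nonneg _)
          _ = Mf (fun i => (List.ofFn r).count i) * ∏ i, ‖v i‖ := mul_comm _ _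
    _ = (∑ r : Fin k → Fin (m + 1), Mf (fun i => (List.ofFn r).count i)) * ∏ i, ‖v i‖ :=
        (Finset.sum_mul _ _ _).symm



section Glue

variable {V : Type*} [NormedAddCommGroup V] [NormedSpace ℝ V]

/-- cut off below the hyperplane. -/
noncomputable def hcut (F : (Fin m → ℝ) × ℝ → V) : (Fin m → ℝ) × ℝ → V :=
  fun x => if 0 < x.2 then F x else 0

lemma hcut_pos {F : (Fin m → ℝ) × ℝ → V} {x : (Fin m → ℝ) × ℝ} (hx : 0 < x.2) :
    hcut F x = F x := if_pos hx

lemma hcut_nonpos {F : (Fin m → ℝ) × ℝ → V} {x : (Fin m → ℝ) × ℝ} (hx : ¬ 0 < x.2) :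
    hcut F x = 0 := if_neg hx

lemma eventually_snd_pos {x : (Fin m → ℝ) × ℝ} (hx : 0 < x.2) :
    ∀ᶠ y in nhds x, 0 < y.2 :=
  (isOpen_lt continuous_const continuous_snd).eventually_mem hx

lemma eventually_snd_neg {x : (Fin m → ℝ) × ℝ} (hx : x.2 < 0) :
    ∀ᶠ y in nhds x, y.2 < 0 :=
  (isOpen_lt continuous_snd continuous_const).eventually_mem hx

lemma hcut_eventuallyEq_pos {F : (Fin m → ℝ) × ℝ → V} {x : (Fin m → ℝ) × ℝ} (hx : 0 < x.2) :
    hcut F =ᶠ[nhds x] F :=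
  (eventually_snd_pos hx).mono fun y hy => hcut_pos hy

lemma hcut_eventuallyEq_neg {F : (Fin m → ℝ) × ℝ → V} {x : (Fin m → ℝ) × ℝ} (hx : x.2 < 0) :
    hcut F =ᶠ[nhds x] fun _ => (0:V) :=
  (eventually_snd_neg hx).mono fun y hy => hcut_nonpos (by linarith)

lemma vanish_fderiv {F : (Fin m → ℝ) × ℝ → V}
    (h0 : ∀ (k : ℕ) x, x.2 = 0 → iteratedFDeriv ℝ k F x = 0) :
    ∀ (k : ℕ) x, x.2 = 0 → iteratedFDeriv ℝ k (fderiv ℝ F) x = 0 := by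
  intro k x hx
  apply ContinuousMultilinearMap.ext
  intro w
  apply ContinuousLinearMap.ext
  intro u
  have h := h0 (k + 1) x hx
  have h2 := iteratedFDeriv_succ_apply_right (𝕜 := ℝ) (f := F) (x := x) (n := k)
    (Fin.snoc w u)
  rw [h, Fin.init_snoc, Fin.snoc_last] at h2
  simpa using h2.symm

lemma hcut_hasFDerivAt {F : (Fin m → ℝ) × ℝ → V} (hF : ContDiff ℝ (⊤:ℕ∞) F)
    (h0 : ∀ (k : ℕ) x, x.2 = 0 → iteratedFDeriv ℝ k F x = 0) (x : (Fin m → ℝ) × ℝ) :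
    HasFDerivAt (hcut F) (hcut (fderiv ℝ F) x) x := by
  have hdiff : Differentiable ℝ F := hF.differentiable (by simp)
  rcases lt_trichotomy x.2 0 with hx | hx | hx
  · rw [hcut_nonpos (by push_neg; linarith : ¬ 0 < x.2)]
    exact (hasFDerivAt_const (0 : V) x).congr_of_eventuallyEq (hcut_eventuallyEq_neg hx)
  · -- boundary point
    have hx2 : x.2 = 0 := hx
    have hF0 : F x = 0 := by
      have h := h0 0 x hx2
      have h2 := iteratedFDeriv_zero_apply (f := F) (𝕜 := ℝ) (x := x) (fun _ : Fin 0 => 0)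
      rw [h] at h2
      simpa using h2.symm
    have hfd0 : fderiv ℝ F x = 0 := by
      apply ContinuousLinearMap.ext
      intro u
      have h := h0 1 x hx2
      have h2 := iteratedFDeriv_one_apply (f := F) (𝕜 := ℝ) (x := x) (fun _ : Fin 1 => u)
      rw [h] at h2
      simpa using h2.symm
    rw [hcut_nonpos (by simp [hx2] : ¬ 0 < x.2), ← hfd0]
    have hlit := (hdiff x).hasFDerivAt
    rw [hasFDerivAt_iff_isLittleO_nhds_zero] at hlit ⊢
    rw [hfd0] at hlit ⊢
    have hle : ∀ y : (Fin m → ℝ) × ℝ,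
        ‖hcut F (x + y) - hcut F x - (0 : ((Fin m → ℝ) × ℝ) →L[ℝ] V) y‖
          ≤ ‖F (x + y) - F x - (0 : ((Fin m → ℝ) × ℝ) →L[ℝ] V) y‖ := by
      intro y
      simp only [ContinuousLinearMap.zero_apply, sub_zero]
      rw [hcut_nonpos (by simp [hx2] : ¬ 0 < x.2), sub_zero, hF0, sub_zero]
      by_cases hy : 0 < (x + y).2
      · rw [hcut_pos hy]
      · rw [hcut_nonpos hy]
        simp
    exact (Asymptotics.isBigO_of_le _ hle).trans_isLittleO hlit
  · rw [hcut_pos hx]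
    exact ((hdiff x).hasFDerivAt).congr_of_eventuallyEq (hcut_eventuallyEq_pos hx)

lemma hcut_fderiv {F : (Fin m → ℝ) × ℝ → V} (hF : ContDiff ℝ (⊤:ℕ∞) F)
    (h0 : ∀ (k : ℕ) x, x.2 = 0 → iteratedFDeriv ℝ k F x = 0) :
    fderiv ℝ (hcut F) = hcut (fderiv ℝ F) :=
  funext fun x => (hcut_hasFDerivAt hF h0 x).fderiv

lemma hcut_continuous {F : (Fin m → ℝ) × ℝ → V} (hF : ContDiff ℝ (⊤:ℕ∞) F)
    (h0 : ∀ (k : ℕ) x, x.2 = 0 → iteratedFDeriv ℝ k F x = 0) :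
    Continuous (hcut F) := by
  rw [continuous_iff_continuousAt]
  intro x
  rcases lt_trichotomy x.2 0 with hx | hx | hx
  · exact ContinuousAt.congr continuousAt_const (hcut_eventuallyEq_neg hx).symm
  · have hx2 : x.2 = 0 := hx
    have hF0 : F x = 0 := by
      have h := h0 0 x hx2
      have h2 := iteratedFDeriv_zero_apply (f := F) (𝕜 := ℝ) (x := x) (fun _ : Fin 0 => 0)
      rw [h] at h2
      simpa using h2.symm
    have hcut0 : hcut F x = 0 := hcut_nonpos (by simp [hx2])
    rw [ContinuousAt, hcut0]
    have hbd : ∀ y : (Fin m → ℝ) × ℝ, ‖hcut F y‖ ≤ ‖F y‖ := by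
      intro y
      by_cases hy : 0 < y.2
      · rw [hcut_pos hy]
      · rw [hcut_nonpos hy]; simp
    have htd : Filter.Tendsto (fun y => ‖F y‖) (nhds x) (nhds 0) := by
      have : Filter.Tendsto (fun y => ‖F y‖) (nhds x) (nhds ‖F x‖) :=
        (hF.continuous.norm).continuousAt
      rwa [hF0, norm_zero] at this
    exact squeeze_zero_norm hbd htd
  · exact ContinuousAt.congr (hF.continuous.continuousAt)
      (hcut_eventuallyEq_pos hx).symm

lemma hcut_contDiff_nat :
    ∀ (k : ℕ) {W : Type} [NormedAddCommGroup W] [NormedSpace ℝ W]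
      (F : (Fin m → ℝ) × ℝ → W), ContDiff ℝ (⊤:ℕ∞) F →
      (∀ (j : ℕ) x, x.2 = 0 → iteratedFDeriv ℝ j F x = 0) →
      ContDiff ℝ (k : ℕ) (hcut F) := by
  intro k
  induction k with
  | zero =>
    intro W _ _ F hF h0
    rw [show ((0:ℕ) : WithTop ℕ∞) = 0 by rfl, contDiff_zero]
    exact hcut_continuous hF h0
  | succ k ih =>
    intro W _ _ F hF h0
    rw [show (((k+1):ℕ) : WithTop ℕ∞) = (k : ℕ) + 1 by exact_mod_cast rfl,
      contDiff_succ_iff_fderiv]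
    refine ⟨fun x => (hcut_hasFDerivAt hF h0 x).differentiableAt, ?_, ?_⟩
    · intro h
      exact absurd h (by exact_mod_cast (by simp))
    · rw [hcut_fderiv hF h0]
      exact ih (fderiv ℝ F) (hF.fderiv_right (by simp)) (vanish_fderiv h0)

lemma hcut_contDiff {F : (Fin m → ℝ) × ℝ → ℝ} (hF : ContDiff ℝ (⊤:ℕ∞) F)
    (h0 : ∀ (k : ℕ) x, x.2 = 0 → iteratedFDeriv ℝ k F x = 0) :
    ContDiff ℝ (⊤:ℕ∞) (hcut F) := by
  rw [show ((⊤:ℕ∞) : WithTop ℕ∞) = ∞ from rfl, contDiff_infty]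
  exact fun n => hcut_contDiff_nat n F hF h0

end Glue



lemma ContDiffTop.differentiable' {E F : Type*} [NormedAddCommGroup E] [NormedSpace ℝ E]
    [NormedAddCommGroup F] [NormedSpace ℝ F] {f : E → F} (hf : ContDiff ℝ (⊤:ℕ∞) f) :
    Differentiable ℝ f := hf.differentiable (by simp)


lemma vanish_pd {F : (Fin m → ℝ) × ℝ → ℝ} (hF : ContDiff ℝ (⊤:ℕ∞) F)
    (h0 : ∀ (k : ℕ) x, x.2 = 0 → iteratedFDeriv ℝ k F x = 0) (v : (Fin m → ℝ) × ℝ) :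
    ∀ (k : ℕ) x, x.2 = 0 → iteratedFDeriv ℝ k (pd v F) x = 0 := by
  intro k x hx
  have hf' : ContDiff ℝ (⊤:ℕ∞) (fderiv ℝ F) := hF.fderiv_right (by simp)
  have hco := (ContinuousLinearMap.apply ℝ ℝ v).iteratedFDeriv_comp_left
    (f := fderiv ℝ F) (hf'.contDiffAt (x := x)) (i := k) (by exact_mod_cast le_top)
  have : pd v F = (ContinuousLinearMap.apply ℝ ℝ v) ∘ (fderiv ℝ F) := rfl
  rw [this, hco, vanish_fderiv h0 k x hx]
  ext w
  simp

lemma pd_hcut {F : (Fin m → ℝ) × ℝ → ℝ} (hF : ContDiff ℝ (⊤:ℕ∞) F)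
    (h0 : ∀ (k : ℕ) x, x.2 = 0 → iteratedFDeriv ℝ k F x = 0) (v : (Fin m → ℝ) × ℝ) :
    pd v (hcut F) = hcut (pd v F) := by
  funext x
  show fderiv ℝ (hcut F) x v = _
  rw [hcut_fderiv hF h0]
  unfold hcut pd
  split_ifs <;> simp

lemma pdList_hcut {F : (Fin m → ℝ) × ℝ → ℝ} (hF : ContDiff ℝ (⊤:ℕ∞) F)
    (h0 : ∀ (k : ℕ) x, x.2 = 0 → iteratedFDeriv ℝ k F x = 0) :
    ∀ l : List ((Fin m → ℝ) × ℝ),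
      ContDiff ℝ (⊤:ℕ∞) (pdList l F)
      ∧ (∀ (k : ℕ) x, x.2 = 0 → iteratedFDeriv ℝ k (pdList l F) x = 0)
      ∧ pdList l (hcut F) = hcut (pdList l F) := by
  intro l
  induction l with
  | nil => exact ⟨hF, h0, rfl⟩
  | cons v l ih =>
    obtain ⟨h1, h2, h3⟩ := ih
    refine ⟨pd_smooth h1, vanish_pd h1 h2 v, ?_⟩
    rw [pdList_cons, h3, pd_hcut h1 h2 v]
    rfl

lemma pd_sub {f h : (Fin m → ℝ) × ℝ → ℝ} (hf : Differentiable ℝ f)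
    (hh : Differentiable ℝ h) (v : (Fin m → ℝ) × ℝ) :
    pd v (fun y => f y - h y) = fun x => pd v f x - pd v h x := by
  funext x
  show fderiv ℝ (fun y => f y - h y) x v = _
  rw [fderiv_fun_sub (hf x) (hh x)]
  rfl

lemma pdList_sub {f h : (Fin m → ℝ) × ℝ → ℝ} (hf : ContDiff ℝ (⊤:ℕ∞) f)
    (hh : ContDiff ℝ (⊤:ℕ∞) h) (l : List ((Fin m → ℝ) × ℝ)) :
    pdList l (fun y => f y - h y) = fun x => pdList l f x - pdList l h x := by
  induction l with
  | nil => rfl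
  | cons v l ih =>
    rw [pdList_cons, ih, pd_sub (ContDiffTop.differentiable' (pdList_smooth hf)) (ContDiffTop.differentiable' (pdList_smooth hh))]
    rfl



section Main

variable {a b : ℤ → ℝ}

noncomputable def sc (b : ℤ → ℝ) (j : ℤ) : ℝ := -(b j)⁻¹
noncomputable def cf (a b : ℤ → ℝ) (j : ℤ) : ℝ := a j / (-(b j))

noncomputable def Lmap (b : ℤ → ℝ) (j : ℤ) :
    ((Fin m → ℝ) × ℝ) →L[ℝ] ((Fin m → ℝ) × ℝ) :=
  (ContinuousLinearMap.fst ℝ (Fin m → ℝ) ℝ).prod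
    ((sc b j) • ContinuousLinearMap.snd ℝ (Fin m → ℝ) ℝ)

lemma Lmap_apply (j : ℤ) (x : (Fin m → ℝ) × ℝ) :
    Lmap b j x = (x.1, sc b j * x.2) := rfl

lemma abs_sc (hb : ∀ j, 0 < b j) (j : ℤ) : |sc b j| = (b j)⁻¹ := by
  rw [sc, abs_neg, abs_inv, abs_of_pos (hb j)]

lemma abs_cf (hb : ∀ j, 0 < b j) (j : ℤ) : |cf a b j| = |a j| * (b j)⁻¹ := by
  rw [cf, abs_div, abs_neg, abs_of_pos (hb j), div_eq_mul_inv]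

lemma norm_Lmap_le (hb : ∀ j, 0 < b j) (j : ℤ) :
    ‖(Lmap b j : ((Fin m → ℝ) × ℝ) →L[ℝ] ((Fin m → ℝ) × ℝ))‖ ≤ max 1 (b j)⁻¹ := by
  refine ContinuousLinearMap.opNorm_le_bound _ (le_trans zero_le_one (le_max_left _ _)) ?_
  intro x
  rw [Lmap_apply, Prod.norm_def]
  apply max_le
  · calc ‖x.1‖ ≤ ‖x‖ := norm_fst_le x
      _ ≤ max 1 (b j)⁻¹ * ‖x‖ :=
        le_mul_of_one_le_left (norm_nonneg _) (le_max_left _ _)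
  · rw [Real.norm_eq_abs, abs_mul, abs_sc hb]
    calc (b j)⁻¹ * |x.2| ≤ (b j)⁻¹ * ‖x‖ := by
          apply mul_le_mul_of_nonneg_left (norm_snd_le x)
          exact inv_nonneg.mpr (hb j).le
      _ ≤ max 1 (b j)⁻¹ * ‖x‖ :=
          mul_le_mul_of_nonneg_right (le_max_right _ _) (norm_nonneg _)

lemma max_one_pow_le (t : ℝ) (ht : 0 ≤ t) (k : ℕ) : (max 1 t) ^ k ≤ 1 + t ^ k := by
  rcases le_total t 1 with h | h
  · rw [max_eq_left h, one_pow]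
    linarith [pow_nonneg ht k]
  · rw [max_eq_right h]
    linarith

lemma hsum2 (hb : ∀ j, 0 < b j) (hsum : ∀ k : ℤ, Summable (fun j : ℤ => |a j| * b j ^ k))
    (p q : ℕ) : Summable fun j : ℤ => |a j| * b j ^ p * ((b j)⁻¹) ^ q := by
  refine (hsum ((p : ℤ) - q)).congr fun j => ?_
  rw [zpow_sub₀ (ne_of_gt (hb j)), zpow_natCast, zpow_natCast, div_eq_mul_inv, ← inv_pow]
  ring

lemma hsum_inv (hb : ∀ j, 0 < b j) (hsum : ∀ k : ℤ, Summable (fun j : ℤ => |a j| * b j ^ k))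
    (q : ℕ) : Summable fun j : ℤ => |a j| * ((b j)⁻¹) ^ q :=
  (hsum2 hb hsum 0 q).congr fun j => by simp

lemma hasSum_cf_sc (hmom : ∀ k : ℕ, 1 ≤ k →
      HasSum (fun j : ℤ => a j * (-(b j)) ^ (-(k : ℤ))) 1) (p : ℕ) :
    HasSum (fun j : ℤ => cf a b j * sc b j ^ p) 1 := by
  have h := hmom (p + 1) (Nat.le_add_left 1 p)
  have heq : (fun j : ℤ => cf a b j * sc b j ^ p)
      = fun j : ℤ => a j * (-(b j)) ^ (-((p + 1 : ℕ) : ℤ)) := by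
    funext j
    have hsc : sc b j = (-(b j))⁻¹ := by rw [sc, inv_neg]
    have hcf : cf a b j = a j * (-(b j))⁻¹ := by rw [cf, div_eq_mul_inv]
    rw [hsc, hcf, zpow_neg, zpow_natCast, ← inv_pow, pow_succ]
    ring
  rw [heq]
  exact_mod_cast h

noncomputable def Tg (a b : ℤ → ℝ) (g : (Fin m → ℝ) × ℝ → ℝ) : (Fin m → ℝ) × ℝ → ℝ :=
  fun x => ∑' j : ℤ, cf a b j • g (Lmap b j x)

lemma term_smooth {g : (Fin m → ℝ) × ℝ → ℝ} (hg : ContDiff ℝ (⊤:ℕ∞) g) (j : ℤ) :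
    ContDiff ℝ (⊤:ℕ∞) (fun y => cf a b j • g (Lmap b j y)) :=
  ((hg.comp (Lmap b j).contDiff)).const_smul _

lemma term_itd {g : (Fin m → ℝ) × ℝ → ℝ} (hg : ContDiff ℝ (⊤:ℕ∞) g) (j : ℤ) (k : ℕ)
    (x : (Fin m → ℝ) × ℝ) :
    iteratedFDeriv ℝ k (fun y => cf a b j • g (Lmap b j y)) x
      = cf a b j • (iteratedFDeriv ℝ k g (Lmap b j x)).compContinuousLinearMap
          (fun _ => Lmap b j) := by
  have h1 : (fun y => cf a b j • g (Lmap b j y)) = cf a b j • (g ∘ Lmap b j) := rfl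
  rw [h1, iteratedFDeriv_const_smul_apply
    ((hg.comp (Lmap b j).contDiff).of_le (by exact_mod_cast le_top)).contDiffAt,
    (Lmap b j).iteratedFDeriv_comp_right hg x (by exact_mod_cast le_top)]

lemma term_itd_norm_le (hb : ∀ j, 0 < b j) {g : (Fin m → ℝ) × ℝ → ℝ}
    (hg : ContDiff ℝ (⊤:ℕ∞) g) (j : ℤ) (k : ℕ) {Mk : ℝ}
    (hMk : ∀ x, ‖iteratedFDeriv ℝ k g x‖ ≤ Mk) (x : (Fin m → ℝ) × ℝ) :
    ‖iteratedFDeriv ℝ k (fun y => cf a b j • g (Lmap b j y)) x‖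
      ≤ |cf a b j| * ((max 1 (b j)⁻¹) ^ k * Mk) := by
  rw [term_itd hg j k x,
    norm_smul (cf a b j) ((iteratedFDeriv ℝ k g (Lmap b j x)).compContinuousLinearMap
      (fun _ => Lmap b j)), Real.norm_eq_abs]
  apply mul_le_mul_of_nonneg_left _ (abs_nonneg _)
  calc ‖(iteratedFDeriv ℝ k g (Lmap b j x)).compContinuousLinearMap (fun _ => Lmap b j)‖
      ≤ ‖iteratedFDeriv ℝ k g (Lmap b j x)‖ * ∏ _i : Fin k, ‖(Lmap b j :
          ((Fin m → ℝ) × ℝ) →L[ℝ] ((Fin m → ℝ) × ℝ))‖ :=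
        ContinuousMultilinearMap.norm_compContinuousLinearMap_le _ _
    _ ≤ Mk * (max 1 (b j)⁻¹) ^ k := by
        apply mul_le_mul (hMk _) _ (Finset.prod_nonneg fun _ _ => norm_nonneg _)
          (le_trans (norm_nonneg _) (hMk (0,0)))
        calc (∏ _i : Fin k, ‖(Lmap b j : ((Fin m → ℝ) × ℝ) →L[ℝ] ((Fin m → ℝ) × ℝ))‖)
            ≤ ∏ _i : Fin k, max 1 (b j)⁻¹ :=
              Finset.prod_le_prod (fun _ _ => norm_nonneg _) (fun _ _ => norm_Lmap_le hb j)
          _ = (max 1 (b j)⁻¹) ^ k := by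
              rw [Finset.prod_const, Finset.card_univ, Fintype.card_fin]
    _ = (max 1 (b j)⁻¹) ^ k * Mk := mul_comm _ _

lemma vb_summable (hb : ∀ j, 0 < b j)
    (hsum : ∀ k : ℤ, Summable (fun j : ℤ => |a j| * b j ^ k)) (k : ℕ) {Mk : ℝ} (hMk0 : 0 ≤ Mk) :
    Summable (fun j : ℤ => |cf a b j| * ((max 1 (b j)⁻¹) ^ k * Mk)) := by
  apply Summable.of_nonneg_of_le
    (fun j => by positivity)
    (fun j => ?_)
    ((((hsum_inv hb hsum 1).add (hsum_inv hb hsum (k+1)))).mul_right Mk)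
  rw [abs_cf hb]
  have h1 : (max 1 (b j)⁻¹) ^ k ≤ 1 + ((b j)⁻¹) ^ k :=
    max_one_pow_le _ (inv_nonneg.mpr (hb j).le) k
  have hbj : (0:ℝ) ≤ (b j)⁻¹ := inv_nonneg.mpr (hb j).le
  calc |a j| * (b j)⁻¹ * ((max 1 (b j)⁻¹) ^ k * Mk)
      ≤ |a j| * (b j)⁻¹ * ((1 + ((b j)⁻¹) ^ k) * Mk) := by
        apply mul_le_mul_of_nonneg_left _ (by positivity)
        exact mul_le_mul_of_nonneg_right h1 hMk0
    _ = (|a j| * ((b j)⁻¹) ^ 1 + |a j| * ((b j)⁻¹) ^ (k + 1)) * Mk := by ring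

lemma Tg_props (hb : ∀ j, 0 < b j)
    (hsum : ∀ k : ℤ, Summable (fun j : ℤ => |a j| * b j ^ k))
    {g : (Fin m → ℝ) × ℝ → ℝ} (hg : IsSchwartzFn g) :
    ContDiff ℝ (⊤:ℕ∞) (Tg a b g)
    ∧ (∀ k : ℕ, iteratedFDeriv ℝ k (Tg a b g)
        = fun x => ∑' j : ℤ, iteratedFDeriv ℝ k (fun y => cf a b j • g (Lmap b j y)) x)
    ∧ ∀ (k : ℕ) (x : (Fin m → ℝ) × ℝ), Summable fun j : ℤ =>
        iteratedFDeriv ℝ k (fun y => cf a b j • g (Lmap b j y)) x := by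
  classical
  choose Mk hMk using fun k => schwartz_itd_bound hg k
  have hf : ∀ j : ℤ, ContDiff ℝ ((⊤:ℕ∞) : WithTop ℕ∞) (fun y => cf a b j • g (Lmap b j y)) :=
    fun j => term_smooth hg.1 j
  have hvs : ∀ k : ℕ, (k : ℕ∞) ≤ (⊤:ℕ∞) →
      Summable (fun j : ℤ => |cf a b j| * ((max 1 (b j)⁻¹) ^ k * Mk k)) :=
    fun k _ => vb_summable hb hsum k (hMk k).1
  have h'f : ∀ (k : ℕ) (j : ℤ) (x : (Fin m → ℝ) × ℝ), (k : ℕ∞) ≤ (⊤:ℕ∞) →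
      ‖iteratedFDeriv ℝ k (fun y => cf a b j • g (Lmap b j y)) x‖
        ≤ |cf a b j| * ((max 1 (b j)⁻¹) ^ k * Mk k) :=
    fun k j x _ => term_itd_norm_le hb hg.1 j k (hMk k).2 x
  refine ⟨contDiff_tsum hf hvs h'f, fun k => iteratedFDeriv_tsum hf hvs h'f le_top,
    fun k x => ?_⟩
  exact Summable.of_norm_bounded (hvs k le_top) (fun j => h'f k j x le_top)

lemma Tg_boundary (hb : ∀ j, 0 < b j)
    (hsum : ∀ k : ℤ, Summable (fun j : ℤ => |a j| * b j ^ k))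
    (hmom : ∀ k : ℕ, 1 ≤ k → HasSum (fun j : ℤ => a j * (-(b j)) ^ (-(k : ℤ))) 1)
    {g : (Fin m → ℝ) × ℝ → ℝ} (hg : IsSchwartzFn g) (k : ℕ)
    (x : (Fin m → ℝ) × ℝ) (hx : x.2 = 0) :
    iteratedFDeriv ℝ k (Tg a b g) x = iteratedFDeriv ℝ k g x := by
  classical
  obtain ⟨hsm, hitd, hsumm⟩ := Tg_props hb hsum hg
  have hLx : ∀ j : ℤ, Lmap b j x = x := by
    intro j
    rw [Lmap_apply]
    have h2 : sc b j * x.2 = x.2 := by rw [hx, mul_zero]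
    rw [h2]
  apply ContinuousMultilinearMap.ext
  intro v
  have hstep : iteratedFDeriv ℝ k (Tg a b g) x v
      = ∑' j : ℤ, (iteratedFDeriv ℝ k (fun y => cf a b j • g (Lmap b j y)) x) v := by
    rw [hitd k]
    exact (ContinuousMultilinearMap.apply ℝ (fun _ : Fin k => ((Fin m → ℝ) × ℝ)) ℝ v).map_tsum
      (hsumm k x)
  rw [hstep]
  set u : Fin k → (Fin m → ℝ) × ℝ := fun i => ((v i).1, 0) with hu
  set q : Fin k → (Fin m → ℝ) × ℝ := fun i => (0, (v i).2) with hq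
  have hterm : ∀ j : ℤ, (iteratedFDeriv ℝ k (fun y => cf a b j • g (Lmap b j y)) x) v
      = cf a b j * (iteratedFDeriv ℝ k g x (fun i => Lmap b j (v i))) := by
    intro j
    rw [term_itd hg.1 j k x, hLx j]
    rfl
  have hdec : ∀ (j : ℤ), (fun i => Lmap b j (v i)) = ((fun i => sc b j • q i) + u) := by
    intro j
    funext i
    rw [Lmap_apply]
    apply Prod.ext
    · show (v i).1 = (((fun i => sc b j • q i) + u) i).1
      simp [hq, hu]
    · show sc b j * (v i).2 = (((fun i => sc b j • q i) + u) i).2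
      simp [hq, hu]
  have hexp : ∀ j : ℤ, iteratedFDeriv ℝ k g x (fun i => Lmap b j (v i))
      = ∑ S : Finset (Fin k), sc b j ^ S.card * iteratedFDeriv ℝ k g x (S.piecewise q u) := by
    intro j
    rw [hdec j]
    have h2 := (iteratedFDeriv ℝ k g x).toMultilinearMap.map_add_univ
      (fun i => sc b j • q i) u
    refine h2.trans (Finset.sum_congr rfl fun S _ => ?_)
    have h3 : S.piecewise (fun i => sc b j • q i) u
        = S.piecewise (fun i => sc b j • (S.piecewise q u) i) (S.piecewise q u) := by
      funext i
      by_cases hi : i ∈ S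
      · simp [Finset.piecewise_eq_of_mem _ _ _ hi]
      · simp [Finset.piecewise_eq_of_notMem _ _ _ hi]
    have h4 := (iteratedFDeriv ℝ k g x).toMultilinearMap.map_piecewise_smul
      (fun _ => sc b j) (S.piecewise q u) S
    calc (iteratedFDeriv ℝ k g x).toMultilinearMap (S.piecewise (fun i => sc b j • q i) u)
        = (iteratedFDeriv ℝ k g x).toMultilinearMap
            (S.piecewise (fun i => sc b j • (S.piecewise q u) i) (S.piecewise q u)) := by
          rw [h3]
      _ = (∏ _i ∈ S, sc b j) • (iteratedFDeriv ℝ k g x) (S.piecewise q u) := h4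
      _ = sc b j ^ S.card * iteratedFDeriv ℝ k g x (S.piecewise q u) := by
          rw [Finset.prod_const, smul_eq_mul]
  have hSsummable : ∀ S : Finset (Fin k), Summable (fun j : ℤ =>
      cf a b j * (sc b j ^ S.card * iteratedFDeriv ℝ k g x (S.piecewise q u))) := by
    intro S
    exact (((hasSum_cf_sc hmom S.card).summable).mul_right
      (iteratedFDeriv ℝ k g x (S.piecewise q u))).congr fun j => by ring
  calc (∑' j : ℤ, (iteratedFDeriv ℝ k (fun y => cf a b j • g (Lmap b j y)) x) v)
      = ∑' j : ℤ, ∑ S : Finset (Fin k),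
          cf a b j * (sc b j ^ S.card * iteratedFDeriv ℝ k g x (S.piecewise q u)) := by
        refine tsum_congr fun j => ?_
        rw [hterm j, hexp j, Finset.mul_sum]
    _ = ∑ S : Finset (Fin k), ∑' j : ℤ,
          cf a b j * (sc b j ^ S.card * iteratedFDeriv ℝ k g x (S.piecewise q u)) :=
        Summable.tsum_finsetSum fun S _ => hSsummable S
    _ = ∑ S : Finset (Fin k), iteratedFDeriv ℝ k g x (S.piecewise q u) := by
        refine Finset.sum_congr rfl fun S _ => ?_
        have h5 : (fun j : ℤ => cf a b j * (sc b j ^ S.card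
            * iteratedFDeriv ℝ k g x (S.piecewise q u)))
            = fun j : ℤ => (cf a b j * sc b j ^ S.card)
              * iteratedFDeriv ℝ k g x (S.piecewise q u) := by
          funext j; ring
        rw [h5, tsum_mul_right, (hasSum_cf_sc hmom S.card).tsum_eq, one_mul]
    _ = iteratedFDeriv ℝ k g x (q + u) :=
        ((iteratedFDeriv ℝ k g x).toMultilinearMap.map_add_univ q u).symm
    _ = iteratedFDeriv ℝ k g x v := by
        congr 1
        funext i
        apply Prod.ext
        · show ((q + u) i).1 = (v i).1
          simp [hq, hu]
        · show ((q + u) i).2 = (v i).2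
          simp [hq, hu]

lemma multiPD_eq_itd {f : (Fin m → ℝ) × ℝ → ℝ} (hf : ContDiff ℝ (⊤:ℕ∞) f)
    (β : Fin (m + 1) → ℕ) (x : (Fin m → ℝ) × ℝ) :
    multiPD β f x = iteratedFDeriv ℝ (idxList β).length f x
      (fun i => basisVec m ((idxList β).get i)) := by
  rw [multiPD_eq_pdList, itd_eq_pdList hf _ (fun i => basisVec m ((idxList β).get i)) x,
    show List.ofFn (fun i => basisVec m ((idxList β).get i))
      = (idxList β).map (basisVec m) from List.ofFn_getElem_eq_map _ _]

lemma Lmap_basis (j : ℤ) (i : Fin (m + 1)) :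
    Lmap b j (basisVec m i) = (if (i : ℕ) < m then 1 else sc b j) • basisVec m i := by
  by_cases h : (i : ℕ) < m
  · simp [Lmap_apply, basisVec, h, Prod.ext_iff]
  · simp [Lmap_apply, basisVec, h, Prod.ext_iff]

lemma prod_scL (β : Fin (m + 1) → ℕ) (j : ℤ) :
    (∏ i : Fin (idxList β).length,
        (if (((idxList β).get i : Fin (m+1)) : ℕ) < m then 1 else sc b j))
      = sc b j ^ β (Fin.last m) := by
  classical
  set h : Fin (m + 1) → ℝ := fun i0 => if (i0 : ℕ) < m then 1 else sc b j with hh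
  have e1 : (∏ i : Fin (idxList β).length, h ((idxList β).get i))
      = ((idxList β).map h).prod := by
    rw [← List.prod_ofFn]; exact congrArg List.prod (List.ofFn_getElem_eq_map _ _)
  have e2 : (idxList β).map h
      = (List.ofFn fun i0 => List.replicate (β i0) (h i0)).flatten := by
    unfold idxList
    rw [List.map_flatten, List.map_ofFn]
    exact congrArg List.flatten (congrArg List.ofFn
      (funext fun i0 => by simp [Function.comp, List.map_replicate]))
  have e3 : ((List.ofFn fun i0 => List.replicate (β i0) (h i0)).flatten).prod
      = ∏ i0 : Fin (m + 1), h i0 ^ β i0 := by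
    rw [List.prod_flatten, List.map_ofFn]
    rw [show (List.prod ∘ fun i0 => List.replicate (β i0) (h i0))
      = fun i0 => h i0 ^ β i0 from funext fun i0 => List.prod_replicate _ _]
    exact List.prod_ofFn
  have e4 : (∏ i0 : Fin (m + 1), h i0 ^ β i0) = h (Fin.last m) ^ β (Fin.last m) := by
    apply Finset.prod_eq_single (Fin.last m)
    · intro i0 _ hne
      have hi0 : (i0 : ℕ) < m := by
        rcases Nat.lt_succ_iff_lt_or_eq.mp i0.isLt with h' | h'
        · exact h'
        · exact absurd (Fin.ext h' : i0 = Fin.last m) hne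
      simp [hh, hi0]
    · intro hmem
      exact absurd (Finset.mem_univ _) hmem
  have e5 : h (Fin.last m) = sc b j := by
    simp [hh]
  rw [show (∏ i : Fin (idxList β).length,
      (if (((idxList β).get i : Fin (m+1)) : ℕ) < m then 1 else sc b j))
    = ∏ i : Fin (idxList β).length, h ((idxList β).get i) from rfl, e1, e2, e3, e4, e5]

lemma multiPD_Tg (hb : ∀ j, 0 < b j)
    (hsum : ∀ k : ℤ, Summable (fun j : ℤ => |a j| * b j ^ k))
    {g : (Fin m → ℝ) × ℝ → ℝ} (hg : IsSchwartzFn g) (β : Fin (m + 1) → ℕ)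
    (x : (Fin m → ℝ) × ℝ) :
    multiPD β (Tg a b g) x
      = ∑' j : ℤ, cf a b j * (sc b j ^ β (Fin.last m) * multiPD β g (Lmap b j x)) := by
  classical
  obtain ⟨hsm, hitd, hsumm⟩ := Tg_props hb hsum hg
  set K := (idxList β).length with hK
  set v : Fin K → (Fin m → ℝ) × ℝ := fun i => basisVec m ((idxList β).get i) with hv
  rw [multiPD_eq_itd hsm β x, hitd K]
  have happ : (∑' j : ℤ, iteratedFDeriv ℝ K (fun y => cf a b j • g (Lmap b j y)) x) v
      = ∑' j : ℤ, (iteratedFDeriv ℝ K (fun y => cf a b j • g (Lmap b j y)) x) v :=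
    (ContinuousMultilinearMap.apply ℝ (fun _ : Fin K => ((Fin m → ℝ) × ℝ)) ℝ v).map_tsum
      (hsumm K x)
  rw [show ((fun z => ∑' j : ℤ, iteratedFDeriv ℝ K
      (fun y => cf a b j • g (Lmap b j y)) z) x) v
    = (∑' j : ℤ, iteratedFDeriv ℝ K (fun y => cf a b j • g (Lmap b j y)) x) v from rfl, happ]
  refine tsum_congr fun j => ?_
  rw [term_itd hg.1 j K x]
  have hstep1 : (cf a b j • (iteratedFDeriv ℝ K g (Lmap b j x)).compContinuousLinearMap
      (fun _ => Lmap b j)) v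
      = cf a b j * (iteratedFDeriv ℝ K g (Lmap b j x) (fun i => Lmap b j (v i))) := rfl
  rw [hstep1]
  congr 1
  have hargs : (fun i => Lmap b j (v i))
      = fun i => (if (((idxList β).get i : Fin (m+1)) : ℕ) < m then 1 else sc b j) • v i :=
    funext fun i => Lmap_basis j _
  rw [hargs]
  have h6 := (iteratedFDeriv ℝ K g (Lmap b j x)).toMultilinearMap.map_smul_univ
    (fun i => if (((idxList β).get i : Fin (m+1)) : ℕ) < m then 1 else sc b j) v
  refine h6.trans ?_
  rw [prod_scL β j, smul_eq_mul]
  congr 1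
  exact (multiPD_eq_itd hg.1 β (Lmap b j x)).symm

lemma multiPD_sub {f h : (Fin m → ℝ) × ℝ → ℝ} (hf : ContDiff ℝ (⊤:ℕ∞) f)
    (hh : ContDiff ℝ (⊤:ℕ∞) h) (β : Fin (m + 1) → ℕ) (x : (Fin m → ℝ) × ℝ) :
    multiPD β (fun y => f y - h y) x = multiPD β f x - multiPD β h x := by
  simp only [multiPD_eq_pdList]
  exact congrFun (pdList_sub hf hh _) x

lemma multiPD_hcut {F : (Fin m → ℝ) × ℝ → ℝ} (hF : ContDiff ℝ (⊤:ℕ∞) F)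
    (h0 : ∀ (k : ℕ) x, x.2 = 0 → iteratedFDeriv ℝ k F x = 0) (β : Fin (m + 1) → ℕ) :
    multiPD β (hcut F) = hcut (multiPD β F) := by
  simp only [multiPD_eq_pdList]
  exact (pdList_hcut hF h0 _).2.2

lemma mono_Lmap (hb : ∀ j, 0 < b j) (α : Fin (m + 1) → ℕ) (j : ℤ) (x : (Fin m → ℝ) × ℝ) :
    |mono α (Lmap b j x)| = ((b j)⁻¹) ^ (α (Fin.last m)) * |mono α x| := by
  have h1 : mono α (Lmap b j x)
      = (∏ i, x.1 i ^ α i.castSucc) * (sc b j * x.2) ^ α (Fin.last m) := rfl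
  have h2 : mono α x = (∏ i, x.1 i ^ α i.castSucc) * x.2 ^ α (Fin.last m) := rfl
  rw [h1, h2, abs_mul, abs_mul, abs_pow, abs_pow, abs_mul, abs_sc hb, mul_pow]
  ring

lemma EadjF_props (hb : ∀ j, 0 < b j)
    (hsum : ∀ k : ℤ, Summable (fun j : ℤ => |a j| * b j ^ k))
    (hmom : ∀ k : ℕ, 1 ≤ k → HasSum (fun j : ℤ => a j * (-(b j)) ^ (-(k : ℤ))) 1)
    {g : (Fin m → ℝ) × ℝ → ℝ} (hg : IsSchwartzFn g) :
    ContDiff ℝ (⊤:ℕ∞) (fun y => g y - Tg a b g y)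
    ∧ ∀ (k : ℕ) x, x.2 = 0 → iteratedFDeriv ℝ k (fun y => g y - Tg a b g y) x = 0 := by
  obtain ⟨hsm, -, -⟩ := Tg_props hb hsum hg
  refine ⟨hg.1.sub hsm, fun k x hx => ?_⟩
  have h1 : (fun y => g y - Tg a b g y) = g + (-(Tg a b g)) := by
    funext y; simp [sub_eq_add_neg]
  have hgk : ContDiff ℝ (k : WithTop ℕ∞) g := hg.1.of_le (by exact_mod_cast le_top)
  have hneg : ContDiff ℝ (k : WithTop ℕ∞) (-(Tg a b g)) :=
    (hsm.of_le (by exact_mod_cast le_top)).neg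
  rw [h1, iteratedFDeriv_add_apply hgk.contDiffAt hneg.contDiffAt, iteratedFDeriv_neg_apply,
    Tg_boundary hb hsum hmom hg k x hx]
  simp

lemma Eadj_eq_hcut (a b : ℤ → ℝ) (g : (Fin m → ℝ) × ℝ → ℝ) :
    Eadj a b g = hcut (fun y => g y - Tg a b g y) := by
  funext x
  show (if 0 < x.2 then g x - ∑' j : ℤ, a j / (-(b j)) * g (x.1, -x.2 / b j) else 0)
    = (if 0 < x.2 then g x - Tg a b g x else 0)
  by_cases hx : 0 < x.2
  · rw [if_pos hx, if_pos hx]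
    congr 1
    refine tsum_congr fun j => ?_
    have harg : ((x.1, -x.2 / b j) : (Fin m → ℝ) × ℝ) = Lmap b j x := by
      rw [Lmap_apply]
      refine Prod.ext rfl ?_
      show -x.2 / b j = sc b j * x.2
      rw [sc, div_eq_mul_inv]
      ring
    rw [harg]
    rfl
  · rw [if_neg hx, if_neg hx]

set_option maxHeartbeats 1000000 in
lemma key_bound (hb : ∀ j, 0 < b j)
    (hsum : ∀ k : ℤ, Summable (fun j : ℤ => |a j| * b j ^ k))
    (hmom : ∀ k : ℕ, 1 ≤ k → HasSum (fun j : ℤ => a j * (-(b j)) ^ (-(k : ℤ))) 1)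
    (α β : Fin (m + 1) → ℕ) :
    ∃ C : ℝ, ∀ g : (Fin m → ℝ) × ℝ → ℝ, IsSchwartzFn g → ∀ x : (Fin m → ℝ) × ℝ,
      |mono α x * multiPD β (Eadj a b g) x|
        ≤ C * ⨆ y : (Fin m → ℝ) × ℝ, |mono α y * multiPD β g y| := by
  classical
  set w : ℤ → ℝ := fun j =>
    |a j| * b j ^ (α (Fin.last m)) * ((b j)⁻¹) ^ (β (Fin.last m) + 1) with hw
  have hws : Summable w := hsum2 hb hsum _ _
  have hw0 : ∀ j, 0 ≤ w j := fun j =>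
    mul_nonneg (mul_nonneg (abs_nonneg _) (pow_nonneg (hb j).le _))
      (pow_nonneg (inv_nonneg.mpr (hb j).le) _)
  refine ⟨1 + ∑' j, w j, ?_⟩
  intro g hg x
  obtain ⟨M, hM⟩ := hg.2 α β
  have hbdd : BddAbove (Set.range fun y => |mono α y * multiPD β g y|) :=
    ⟨M, by rintro _ ⟨y, rfl⟩; exact hM y⟩
  set S := ⨆ y : (Fin m → ℝ) × ℝ, |mono α y * multiPD β g y| with hS
  have hle : ∀ y, |mono α y * multiPD β g y| ≤ S := fun y => le_ciSup hbdd y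
  have hS0 : 0 ≤ S := le_trans (abs_nonneg _) (hle (0, 0))
  have hW0 : 0 ≤ ∑' j, w j := tsum_nonneg hw0
  obtain ⟨hFsm, hFvan⟩ := EadjF_props hb hsum hmom hg
  rw [Eadj_eq_hcut a b g, multiPD_hcut hFsm hFvan β]
  by_cases hx : 0 < x.2
  · rw [hcut_pos hx]
    obtain ⟨hTsm, -, -⟩ := Tg_props hb hsum hg
    rw [multiPD_sub hg.1 hTsm β x, multiPD_Tg hb hsum hg β x]
    set t : ℤ → ℝ := fun j => cf a b j * (sc b j ^ β (Fin.last m) * multiPD β g (Lmap b j x))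
      with ht
    have hterm_bound : ∀ j : ℤ,
        |mono α x * (cf a b j * (sc b j ^ β (Fin.last m) * multiPD β g (Lmap b j x)))|
          ≤ w j * S := by
      intro j
      have h1 : |mono α x| = b j ^ (α (Fin.last m)) * |mono α (Lmap b j x)| := by
        rw [mono_Lmap hb α j x, ← mul_assoc, ← mul_pow,
          mul_inv_cancel₀ (ne_of_gt (hb j)), one_pow, one_mul]
      calc |mono α x * (cf a b j * (sc b j ^ β (Fin.last m) * multiPD β g (Lmap b j x)))|
          = |cf a b j| * |sc b j| ^ β (Fin.last m)
              * (|mono α x| * |multiPD β g (Lmap b j x)|) := by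
            rw [abs_mul, abs_mul, abs_mul, abs_pow]; ring
        _ = w j * |mono α (Lmap b j x) * multiPD β g (Lmap b j x)| := by
            rw [h1, abs_cf hb, abs_sc hb, hw, abs_mul]
            ring
        _ ≤ w j * S := mul_le_mul_of_nonneg_left (hle _) (hw0 j)
    have hterm_bound' : ∀ j : ℤ, |mono α x * t j| ≤ w j * S := hterm_bound
    have habs_summ : Summable (fun j : ℤ => |mono α x * t j|) :=
      Summable.of_nonneg_of_le (fun j => abs_nonneg _) hterm_bound' (hws.mul_right S)
    calc |mono α x * (multiPD β g x - ∑' j : ℤ, t j)|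
        = |mono α x * multiPD β g x - mono α x * ∑' j : ℤ, t j| := by
          rw [mul_sub]
      _ ≤ |mono α x * multiPD β g x| + |mono α x * ∑' j : ℤ, t j| := abs_sub _ _
      _ ≤ S + (∑' j, w j) * S := by
          apply add_le_add (hle x)
          rw [← tsum_mul_left]
          have habs_summ' : Summable (fun j : ℤ => ‖mono α x * t j‖) := by
            simpa only [Real.norm_eq_abs] using habs_summ
          have hn0 := norm_tsum_le_tsum_norm habs_summ'
          have hn : |∑' j : ℤ, mono α x * t j| ≤ ∑' j : ℤ, |mono α x * t j| := by
            simpa only [Real.norm_eq_abs] using hn0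
          calc |∑' j : ℤ, mono α x * t j| ≤ ∑' j : ℤ, |mono α x * t j| := hn
            _ ≤ ∑' j : ℤ, w j * S := Summable.tsum_le_tsum hterm_bound' habs_summ (hws.mul_right S)
            _ = (∑' j, w j) * S := tsum_mul_right
      _ = (1 + ∑' j, w j) * S := by ring
  · rw [hcut_nonpos hx, mul_zero, abs_zero]
    exact mul_nonneg (by linarith) hS0

end Main

end S18


/-- if ∑_j |a_j| b_j^m < ∞ for every m ∈ ℤ and ∑_j a_j(-b_j)^{-k} = 1
for every integer k ≥ 1 (b_j > 0), then for every Schwartz function g, E*g is a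
Schwartz function supported in the closed half-space {xₙ ≥ 0}, and for all
multi-indices α, β there is a constant C, independent of g, with
sup_x |x^α ∂^β(E*g)(x)| ≤ C · sup_y |y^α ∂^β g(y)|. -/
theorem statement18 (m : ℕ) (a b : ℤ → ℝ) (hb : ∀ j, 0 < b j)
    (hsum : ∀ k : ℤ, Summable (fun j : ℤ => |a j| * b j ^ k))
    (hmom : ∀ k : ℕ, 1 ≤ k → HasSum (fun j : ℤ => a j * (-(b j)) ^ (-(k : ℤ))) 1) :
    (∀ g : (Fin m → ℝ) × ℝ → ℝ, IsSchwartzFn g →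
      IsSchwartzFn (Eadj a b g) ∧
      ∀ x : (Fin m → ℝ) × ℝ, Eadj a b g x ≠ 0 → 0 ≤ x.2) ∧
    (∀ α β : Fin (m + 1) → ℕ, ∃ C : ℝ,
      ∀ g : (Fin m → ℝ) × ℝ → ℝ, IsSchwartzFn g →
        ∀ x : (Fin m → ℝ) × ℝ,
          |mono α x * multiPD β (Eadj a b g) x| ≤
            C * ⨆ y : (Fin m → ℝ) × ℝ, |mono α y * multiPD β g y|) := by
  constructor
  · intro g hg
    obtain ⟨hFsm, hFvan⟩ := S18.EadjF_props hb hsum hmom hg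
    refine ⟨⟨?_, ?_⟩, ?_⟩
    · rw [S18.Eadj_eq_hcut a b g]
      exact S18.hcut_contDiff hFsm hFvan
    · intro α β
      obtain ⟨C, hC⟩ := S18.key_bound hb hsum hmom α β
      exact ⟨C * ⨆ y : (Fin m → ℝ) × ℝ, |mono α y * multiPD β g y|, fun x => hC g hg x⟩
    · intro x hx
      by_contra hxc
      push_neg at hxc
      apply hx
      show (if 0 < x.2 then g x - ∑' j : ℤ, a j / (-(b j)) * g (x.1, -x.2 / b j) else 0) = 0
      rw [if_neg (not_lt.mpr hxc.le)]
  · intro α β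
    obtain ⟨C, hC⟩ := S18.key_bound hb hsum hmom α β
    exact ⟨C, hC⟩
end
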